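/- Projective measurement increases quantum f-entropy: for a complete family of orthogonal projectors {P_i} with Σ_i P_i = I and strictly positive ρ with Σ_i P_i ρ P_i strictly positive, S_f(Σ_i P_i ρ P_i) ≥ S_f(ρ). -/

import Mathlib

open Matrix Kronecker
open scoped ComplexOrder

noncomputable def applyFun {n : Type*} [Fintype n] [DecidableEq n]
    (f : ℝ → ℝ) (A : Matrix n n ℂ) : Matrix n n ℂ := by
  classical exact
    if hA : A.IsHermitian then
      (hA.eigenvectorUnitary : Matrix n n ℂ) *
        Matrix.diagonal (fun i => (f (hA.eigenvalues i) : ℂ)) *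
        (star (hA.eigenvectorUnitary : Matrix n n ℂ))
    else 0

noncomputable def msqrt {n : Type*} [Fintype n] [DecidableEq n]
    (A : Matrix n n ℂ) : Matrix n n ℂ := by
  classical exact if h : A.PosSemidef then
    (h.1.eigenvectorUnitary : Matrix n n ℂ) *
      Matrix.diagonal ((↑) ∘ (Real.sqrt ·) ∘ h.1.eigenvalues) *
      (star h.1.eigenvectorUnitary : Matrix n n ℂ) else 0

def vecOf {m n : Type*} (A : Matrix m n ℂ) : m × n → ℂ := fun p => A p.1 p.2

noncomputable def Srel {n : Type*} [Fintype n] [DecidableEq n]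
    (f : ℝ → ℝ) (ρ σ : Matrix n n ℂ) : ℝ :=
  (star (vecOf (msqrt ρ)) ⬝ᵥ (applyFun f (σ ⊗ₖ (ρ⁻¹)ᵀ) *ᵥ vecOf (msqrt ρ))).re

def OperatorConvexOn (I : Set ℝ) (f : ℝ → ℝ) : Prop :=
  ∀ (n : ℕ) (A B : Matrix (Fin n) (Fin n) ℂ) (hA : A.IsHermitian) (hB : B.IsHermitian),
    (∀ i, hA.eigenvalues i ∈ I) → (∀ i, hB.eigenvalues i ∈ I) →
    ∀ lam : ℝ, 0 ≤ lam → lam ≤ 1 →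
      ((lam : ℂ) • applyFun f A + ((1 - lam : ℝ) : ℂ) • applyFun f B -
        applyFun f ((lam : ℂ) • A + ((1 - lam : ℝ) : ℂ) • B)).PosSemidef

noncomputable def entf {n : Type*} [Fintype n] [DecidableEq n]
    (f : ℝ → ℝ) (ρ : Matrix n n ℂ) : ℝ :=
  -(Matrix.trace (ρ * applyFun f ρ⁻¹)).re

noncomputable def ptraceB {α β : Type*} [Fintype β]
    (M : Matrix (α × β) (α × β) ℂ) : Matrix α α ℂ :=
  Matrix.of fun i j => ∑ k, M (i, k) (j, k)

noncomputable def ptraceA {α β : Type*} [Fintype α]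
    (M : Matrix (α × β) (α × β) ℂ) : Matrix β β ℂ :=
  Matrix.of fun i j => ∑ k, M (k, i) (k, j)

def NonAffineOn (I : Set ℝ) (f : ℝ → ℝ) : Prop :=
  ¬ ∃ c b : ℝ, ∀ t ∈ I, f t = c * t + b

lemma applyFun_of_isHermitian {n : Type*} [Fintype n] [DecidableEq n]
    (f : ℝ → ℝ) {A : Matrix n n ℂ} (hA : A.IsHermitian) :
    applyFun f A = (hA.eigenvectorUnitary : Matrix n n ℂ) *
        Matrix.diagonal (fun i => (f (hA.eigenvalues i) : ℂ)) *
        (star (hA.eigenvectorUnitary : Matrix n n ℂ)) := by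
  simp only [applyFun]
  rw [dif_pos hA]

lemma isHermitian_real_smul_one {n : Type*} [Fintype n] [DecidableEq n] (a : ℝ) :
    ((a : ℂ) • (1 : Matrix n n ℂ)).IsHermitian := by
  simp [Matrix.IsHermitian, conjTranspose_smul, Complex.star_def, Complex.conj_ofReal]

lemma eigenvalues_real_smul_one {n : Type*} [Fintype n] [DecidableEq n] (a : ℝ)
    (hA : ((a : ℂ) • (1 : Matrix n n ℂ)).IsHermitian) (i : n) : hA.eigenvalues i = a := by
  have h := hA.conjStarAlgAut_star_eigenvectorUnitary
  rw [Unitary.conjStarAlgAut_star_apply] at h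
  have h2 : star (hA.eigenvectorUnitary : Matrix n n ℂ) * ((a : ℂ) • (1 : Matrix n n ℂ)) *
      (hA.eigenvectorUnitary : Matrix n n ℂ) = (a : ℂ) • (1 : Matrix n n ℂ) := by
    rw [mul_smul_comm, mul_one, smul_mul_assoc, Matrix.UnitaryGroup.star_mul_self]
  rw [h2] at h
  have := congrFun (congrFun h.symm i) i
  simp [Matrix.diagonal_apply_eq, Matrix.smul_apply, Matrix.one_apply_eq] at this
  exact_mod_cast this

lemma applyFun_real_smul_one {n : Type*} [Fintype n] [DecidableEq n] (f : ℝ → ℝ) (a : ℝ) :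
    applyFun f ((a : ℂ) • (1 : Matrix n n ℂ)) = (f a : ℂ) • 1 := by
  have hA := isHermitian_real_smul_one (n := n) a
  rw [applyFun_of_isHermitian f hA]
  have hd : (Matrix.diagonal fun i => (f (hA.eigenvalues i) : ℂ)) = (f a : ℂ) • 1 := by
    have hfun : (fun i => (f (hA.eigenvalues i) : ℂ)) = fun _ => (f a : ℂ) :=
      funext fun i => by rw [eigenvalues_real_smul_one a hA i]
    rw [hfun, ← Matrix.smul_one_eq_diagonal]
  have hU : (hA.eigenvectorUnitary : Matrix n n ℂ) * star (hA.eigenvectorUnitary : Matrix n n ℂ)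
      = 1 := Matrix.mem_unitaryGroup_iff.mp hA.eigenvectorUnitary.2
  rw [hd, mul_smul_comm, mul_one, smul_mul_assoc, hU]

open scoped ComplexOrder in
lemma nonneg_of_posSemidef_smul_one {c : ℝ}
    (h : ((c : ℂ) • (1 : Matrix (Fin 1) (Fin 1) ℂ)).PosSemidef) : 0 ≤ c := by
  have h2 := h.dotProduct_mulVec_nonneg (fun _ => 1)
  simp [Matrix.mulVec, dotProduct] at h2
  exact_mod_cast h2

lemma convexOn_of_operatorConvexOn {f : ℝ → ℝ} (hf : OperatorConvexOn (Set.Ioi 0) f) :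
    ConvexOn ℝ (Set.Ioi 0) f := by
  refine ⟨convex_Ioi 0, ?_⟩
  intro x hx y hy a b ha hb hab
  have hA := isHermitian_real_smul_one (n := Fin 1) x
  have hB := isHermitian_real_smul_one (n := Fin 1) y
  have hmemA : ∀ i, hA.eigenvalues i ∈ Set.Ioi 0 := fun i => by
    rw [eigenvalues_real_smul_one x hA i]; exact hx
  have hmemB : ∀ i, hB.eigenvalues i ∈ Set.Ioi 0 := fun i => by
    rw [eigenvalues_real_smul_one y hB i]; exact hy
  have key := hf 1 _ _ hA hB hmemA hmemB a ha (by linarith)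
  have hb' : (1 - a : ℝ) = b := by linarith
  have ecomb : (a : ℂ) • ((x : ℂ) • (1 : Matrix (Fin 1) (Fin 1) ℂ)) +
      ((1 - a : ℝ) : ℂ) • ((y : ℂ) • (1 : Matrix (Fin 1) (Fin 1) ℂ)) =
      ((a * x + b * y : ℝ) : ℂ) • (1 : Matrix (Fin 1) (Fin 1) ℂ) := by
    rw [smul_smul, smul_smul, ← add_smul]
    congr 1
    rw [hb']; push_cast; ring
  rw [ecomb, applyFun_real_smul_one, applyFun_real_smul_one, applyFun_real_smul_one] at key
  have ekey : (a : ℂ) • ((f x : ℂ) • (1 : Matrix (Fin 1) (Fin 1) ℂ)) +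
      ((1 - a : ℝ) : ℂ) • ((f y : ℂ) • (1 : Matrix (Fin 1) (Fin 1) ℂ)) -
      ((f (a * x + b * y) : ℂ)) • 1 =
      ((a * f x + b * f y - f (a * x + b * y) : ℝ) : ℂ) • (1 : Matrix (Fin 1) (Fin 1) ℂ) := by
    rw [smul_smul, smul_smul, ← add_smul, ← sub_smul]
    congr 1
    rw [hb']; push_cast; ring
  rw [ekey] at key
  have := nonneg_of_posSemidef_smul_one key
  simp only [smul_eq_mul]
  linarith

lemma convexOn_mul_inv {f : ℝ → ℝ} (hf : ConvexOn ℝ (Set.Ioi 0) f) :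
    ConvexOn ℝ (Set.Ioi 0) (fun t => t * f t⁻¹) := by
  refine ⟨convex_Ioi 0, ?_⟩
  intro x hx y hy a b ha hb hab
  simp only [smul_eq_mul]
  rcases eq_or_lt_of_le ha with ha0 | ha0
  · simp [← ha0, show b = 1 by linarith]
  rcases eq_or_lt_of_le hb with hb0 | hb0
  · simp [← hb0, show a = 1 by linarith]
  have hx0 : (0:ℝ) < x := hx
  have hy0 : (0:ℝ) < y := hy
  have ht : (0:ℝ) < a * x + b * y := by positivity
  set t := a * x + b * y with hts
  have hμ1 : 0 ≤ a * x / t := by positivity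
  have hμ2 : 0 ≤ b * y / t := by positivity
  have hμsum : a * x / t + b * y / t = 1 := by field_simp; exact hts.symm
  have harg : t⁻¹ = (a * x / t) * x⁻¹ + (b * y / t) * y⁻¹ := by
    rw [div_mul_eq_mul_div, div_mul_eq_mul_div, ← add_div, mul_assoc, mul_inv_cancel₀ hx0.ne',
      mul_assoc, mul_inv_cancel₀ hy0.ne', mul_one, mul_one, hab, one_div]
  have hj := hf.2 (Set.mem_Ioi.mpr (inv_pos.mpr hx0)) (Set.mem_Ioi.mpr (inv_pos.mpr hy0))
    hμ1 hμ2 hμsum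
  rw [smul_eq_mul, smul_eq_mul, smul_eq_mul, smul_eq_mul, ← harg] at hj
  have := mul_le_mul_of_nonneg_left hj ht.le
  calc t * f t⁻¹ ≤ t * (a * x / t * f x⁻¹ + b * y / t * f y⁻¹) := this
    _ = a * (x * f x⁻¹) + b * (y * f y⁻¹) := by field_simp

lemma star_mul_self_unitary {n : Type*} [Fintype n] [DecidableEq n]
    (U : Matrix.unitaryGroup n ℂ) :
    (star (U : Matrix n n ℂ)) * (U : Matrix n n ℂ) = 1 :=
  Matrix.mem_unitaryGroup_iff'.mp U.2

lemma posdef_decomp {n : Type*} [Fintype n] [DecidableEq n]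
    (A : Matrix n n ℂ) (hA : A.PosDef) :
    A = (hA.inv.1.eigenvectorUnitary : Matrix n n ℂ) *
      Matrix.diagonal (fun k => (((hA.inv.1.eigenvalues k)⁻¹ : ℝ) : ℂ)) *
      star (hA.inv.1.eigenvectorUnitary : Matrix n n ℂ) := by
  set U : Matrix n n ℂ := (hA.inv.1.eigenvectorUnitary : Matrix n n ℂ) with hU
  set μ : n → ℝ := hA.inv.1.eigenvalues with hμ
  have hspec : A⁻¹ = U * Matrix.diagonal (RCLike.ofReal ∘ μ) * star U :=
    hA.inv.1.spectral_theorem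
  have hdet : IsUnit A.det := (Matrix.isUnit_iff_isUnit_det _).mp hA.isUnit
  have hAinvinv : A = (A⁻¹)⁻¹ := (Matrix.nonsing_inv_nonsing_inv _ hdet).symm
  have hUU : star U * U = 1 := star_mul_self_unitary _
  have hUU' : U * star U = 1 := Matrix.mem_unitaryGroup_iff.mp hA.inv.1.eigenvectorUnitary.2
  have hdd : Matrix.diagonal (RCLike.ofReal ∘ μ) *
      Matrix.diagonal (fun k => (((μ k)⁻¹ : ℝ) : ℂ)) = 1 := by
    have hk : ∀ k : n, (RCLike.ofReal ∘ μ) k * (((μ k)⁻¹ : ℝ) : ℂ) = 1 := fun k => by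
      have hk0 : μ k ≠ 0 := (hA.inv.eigenvalues_pos k).ne'
      have he : ((RCLike.ofReal (μ k)) : ℂ) = Complex.ofReal (μ k) := rfl
      simp only [Function.comp_apply, he]
      rw [← Complex.ofReal_mul, mul_inv_cancel₀ hk0, Complex.ofReal_one]
    rw [Matrix.diagonal_mul_diagonal]
    simp only [hk, Matrix.diagonal_one]
  have hmul : (U * Matrix.diagonal (RCLike.ofReal ∘ μ) * star U) *
      (U * Matrix.diagonal (fun k => (((μ k)⁻¹ : ℝ) : ℂ)) * star U) = 1 := by
    calc (U * Matrix.diagonal (RCLike.ofReal ∘ μ) * star U) *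
        (U * Matrix.diagonal (fun k => (((μ k)⁻¹ : ℝ) : ℂ)) * star U)
        = U * (Matrix.diagonal (RCLike.ofReal ∘ μ) * ((star U * U) *
          Matrix.diagonal (fun k => (((μ k)⁻¹ : ℝ) : ℂ)))) * star U := by
          simp only [Matrix.mul_assoc]
      _ = 1 := by rw [hUU, one_mul, hdd, mul_one, hUU']
  have h1 : (A⁻¹)⁻¹ = U * Matrix.diagonal (fun k => (((μ k)⁻¹ : ℝ) : ℂ)) * star U := by
    conv_lhs => rw [hspec]
    exact Matrix.inv_eq_right_inv hmul
  exact hAinvinv.trans h1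

lemma entf_eq_sum {n : Type*} [Fintype n] [DecidableEq n]
    (f : ℝ → ℝ) (A : Matrix n n ℂ) (hA : A.PosDef) :
    entf f A = -∑ k, (hA.inv.1.eigenvalues k)⁻¹ * f (hA.inv.1.eigenvalues k) := by
  unfold entf
  rw [applyFun_of_isHermitian f hA.inv.1]
  set U : Matrix n n ℂ := (hA.inv.1.eigenvectorUnitary : Matrix n n ℂ) with hU
  set μ : n → ℝ := hA.inv.1.eigenvalues with hμ
  set D1 : Matrix n n ℂ := Matrix.diagonal (fun k => (((μ k)⁻¹ : ℝ) : ℂ)) with hD1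
  set D2 : Matrix n n ℂ := Matrix.diagonal (fun i => (f (μ i) : ℂ)) with hD2
  have hUU : star U * U = 1 := star_mul_self_unitary _
  have hprod : A * (U * D2 * star U) = U * (D1 * D2) * star U := by
    conv_lhs => rw [posdef_decomp A hA]
    calc (U * D1 * star U) * (U * D2 * star U)
        = U * (D1 * ((star U * U) * D2)) * star U := by simp only [Matrix.mul_assoc]
      _ = U * (D1 * D2) * star U := by rw [hUU, one_mul]
  rw [hprod, Matrix.trace_mul_cycle, ← Matrix.mul_assoc, hUU, one_mul]
  have hd : D1 * D2 = Matrix.diagonal (fun k => (((μ k)⁻¹ * f (μ k) : ℝ) : ℂ)) := by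
    rw [hD1, hD2, Matrix.diagonal_mul_diagonal]
    congr 1
    funext k
    push_cast
    ring
  rw [hd, Matrix.trace_diagonal]
  rw [← Complex.ofReal_sum]
  simp

lemma diag_entry {n : Type*} [Fintype n] [DecidableEq n]
    (N : Matrix n n ℂ) (w : n → ℝ) (j : n) :
    (N * Matrix.diagonal (fun k => (w k : ℂ)) * star N) j j
      = ∑ k, ((Complex.normSq (N j k) * w k : ℝ) : ℂ) := by
  rw [Matrix.mul_apply]
  refine Finset.sum_congr rfl fun k _ => ?_
  rw [Matrix.mul_diagonal, Matrix.star_apply, Complex.star_def,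
    mul_comm (N j k) ((w k : ℂ)), mul_assoc, Complex.mul_conj]
  push_cast
  ring

lemma mul_star_entry {n : Type*} [Fintype n] [DecidableEq n]
    (N : Matrix n n ℂ) (j : n) :
    (N * star N) j j = ∑ k, ((Complex.normSq (N j k) : ℝ) : ℂ) := by
  rw [Matrix.mul_apply]
  refine Finset.sum_congr rfl fun k _ => ?_
  rw [Matrix.star_apply, Complex.star_def, Complex.mul_conj]

lemma star_mul_entry {n : Type*} [Fintype n] [DecidableEq n]
    (N : Matrix n n ℂ) (k : n) :
    (star N * N) k k = ∑ j, ((Complex.normSq (N j k) : ℝ) : ℂ) := by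
  rw [Matrix.mul_apply]
  refine Finset.sum_congr rfl fun j _ => ?_
  rw [Matrix.star_apply, Complex.star_def, mul_comm, Complex.mul_conj]

lemma key_ineq {d m : ℕ} (hh : ℝ → ℝ) (hconv : ConvexOn ℝ (Set.Ioi 0) hh)
    (P : Fin m → Matrix (Fin d) (Fin d) ℂ)
    (hHerm : ∀ i, (P i).IsHermitian) (hIdem : ∀ i, P i * P i = P i)
    (hSum : ∑ i, P i = 1)
    (lam nu : Fin d → ℝ) (hlam : ∀ k, 0 < lam k)
    (U V : Matrix (Fin d) (Fin d) ℂ)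
    (hUU' : U * star U = 1) (hVV : star V * V = 1) (hVV' : V * star V = 1)
    (heq : ∑ i, P i * (U * Matrix.diagonal (fun k => (lam k : ℂ)) * star U) * P i
      = V * Matrix.diagonal (fun j => (nu j : ℂ)) * star V) :
    ∑ j, hh (nu j) ≤ ∑ k, hh (lam k) := by
  classical
  set M : Fin m → Matrix (Fin d) (Fin d) ℂ := fun i => star V * P i * U with hM
  set D : Fin d → Fin d → ℝ := fun j k => ∑ i, Complex.normSq (M i j k) with hD
  have hDnonneg : ∀ j k, 0 ≤ D j k := fun j k =>
    Finset.sum_nonneg fun i _ => Complex.normSq_nonneg _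
  have hstarM : ∀ i, star (M i) = star U * P i * V := by
    intro i
    simp only [hM, Matrix.star_eq_conjTranspose, Matrix.conjTranspose_mul,
      Matrix.conjTranspose_conjTranspose, (hHerm i).eq, Matrix.mul_assoc]
  have hPP : ∑ i, P i * P i = 1 := by
    rw [← hSum]
    exact Finset.sum_congr rfl fun i _ => hIdem i
  -- key1
  have key1 : ∑ i, M i * Matrix.diagonal (fun k => (lam k : ℂ)) * star (M i)
      = Matrix.diagonal (fun j => (nu j : ℂ)) := by
    have h1 : star V * (∑ i, P i * (U * Matrix.diagonal (fun k => (lam k : ℂ)) * star U) * P i)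
        * V = ∑ i, M i * Matrix.diagonal (fun k => (lam k : ℂ)) * star (M i) := by
      rw [Finset.mul_sum, Finset.sum_mul]
      refine Finset.sum_congr rfl fun i _ => ?_
      rw [hstarM i]
      simp only [hM, Matrix.mul_assoc]
    have h2 : star V * (V * Matrix.diagonal (fun j => (nu j : ℂ)) * star V) * V
        = Matrix.diagonal (fun j => (nu j : ℂ)) := by
      calc star V * (V * Matrix.diagonal (fun j => (nu j : ℂ)) * star V) * V
          = (star V * V) * Matrix.diagonal (fun j => (nu j : ℂ)) * (star V * V) := by
            simp only [Matrix.mul_assoc]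
        _ = _ := by rw [hVV, one_mul, mul_one]
    rw [← h1, heq, h2]
  -- diagonal identity, real form
  have hD1 : ∀ j, nu j = ∑ k, D j k * lam k := by
    intro j
    have := congrFun (congrFun (congrArg (fun X => X) key1) j) j
    have hjj : (∑ i, M i * Matrix.diagonal (fun k => (lam k : ℂ)) * star (M i)) j j
        = (Matrix.diagonal (fun j => (nu j : ℂ))) j j := by rw [key1]
    rw [Matrix.sum_apply, Matrix.diagonal_apply_eq] at hjj
    have hlhs : ∑ i, (M i * Matrix.diagonal (fun k => (lam k : ℂ)) * star (M i)) j j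
        = ((∑ k, D j k * lam k : ℝ) : ℂ) := by
      rw [Finset.sum_congr rfl fun i _ => diag_entry (M i) lam j]
      rw [Finset.sum_comm]
      push_cast
      refine Finset.sum_congr rfl fun k _ => ?_
      rw [hD]
      push_cast
      rw [Finset.sum_mul]
    rw [hlhs] at hjj
    exact_mod_cast hjj.symm
  -- row sums
  have hrow : ∀ j, ∑ k, D j k = 1 := by
    intro j
    have hsum1 : ∑ i, M i * star (M i) = 1 := by
      have h1 : ∀ i, M i * star (M i) = star V * (P i * P i) * V := by
        intro i
        rw [hstarM i]
        calc M i * (star U * P i * V)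
            = star V * (P i * ((U * star U) * P i)) * V := by
              simp only [hM, Matrix.mul_assoc]
          _ = star V * (P i * P i) * V := by rw [hUU', one_mul]
      rw [Finset.sum_congr rfl fun i _ => h1 i, ← Finset.sum_mul, ← Finset.mul_sum, hPP,
        mul_one, hVV]
    have hjj : (∑ i, M i * star (M i)) j j = (1 : Matrix (Fin d) (Fin d) ℂ) j j := by
      rw [hsum1]
    rw [Matrix.sum_apply, Matrix.one_apply_eq] at hjj
    rw [Finset.sum_congr rfl fun i _ => mul_star_entry (M i) j, Finset.sum_comm] at hjj
    have : ((∑ k, D j k : ℝ) : ℂ) = 1 := by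
      simp only [hD]
      push_cast
      exact hjj
    exact_mod_cast this
  -- column sums
  have hcol : ∀ k, ∑ j, D j k = 1 := by
    intro k
    have hsum2 : ∑ i, star (M i) * M i = 1 := by
      have h1 : ∀ i, star (M i) * M i = star U * (P i * P i) * U := by
        intro i
        rw [hstarM i]
        calc (star U * P i * V) * M i
            = star U * (P i * ((V * star V) * P i)) * U := by
              simp only [hM, Matrix.mul_assoc]
          _ = star U * (P i * P i) * U := by rw [hVV', one_mul]
      rw [Finset.sum_congr rfl fun i _ => h1 i, ← Finset.sum_mul, ← Finset.mul_sum, hPP,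
        mul_one]
      have hUU : star U * U = 1 := by
        rw [mul_eq_one_comm] at hUU'
        exact hUU'
      exact hUU
    have hkk : (∑ i, star (M i) * M i) k k = (1 : Matrix (Fin d) (Fin d) ℂ) k k := by
      rw [hsum2]
    rw [Matrix.sum_apply, Matrix.one_apply_eq] at hkk
    rw [Finset.sum_congr rfl fun i _ => star_mul_entry (M i) k, Finset.sum_comm] at hkk
    have : ((∑ j, D j k : ℝ) : ℂ) = 1 := by
      simp only [hD]
      push_cast
      exact hkk
    exact_mod_cast this
  -- Jensen
  have hjen : ∀ j, hh (nu j) ≤ ∑ k, D j k * hh (lam k) := by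
    intro j
    have h := hconv.map_sum_le (t := Finset.univ) (w := D j) (p := lam)
      (fun k _ => hDnonneg j k) (hrow j) (fun k _ => hlam k)
    simp only [smul_eq_mul] at h
    rw [← hD1 j] at h
    exact h
  calc ∑ j, hh (nu j) ≤ ∑ j, ∑ k, D j k * hh (lam k) :=
        Finset.sum_le_sum fun j _ => hjen j
    _ = ∑ k, ∑ j, D j k * hh (lam k) := Finset.sum_comm
    _ = ∑ k, hh (lam k) := by
        refine Finset.sum_congr rfl fun k _ => ?_
        rw [← Finset.sum_mul, hcol k, one_mul]

/-- projective measurement increases quantum f-entropy. -/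
theorem entf_pinching_le {d m : ℕ} (f : ℝ → ℝ)
    (hf : OperatorConvexOn (Set.Ioi 0) f)
    (P : Fin m → Matrix (Fin d) (Fin d) ℂ)
    (hHerm : ∀ i, (P i).IsHermitian) (hIdem : ∀ i, P i * P i = P i)
    (hOrth : ∀ i j, i ≠ j → P i * P j = 0) (hSum : ∑ i, P i = 1)
    (ρ : Matrix (Fin d) (Fin d) ℂ) (hρ : ρ.PosDef)
    (hpinch : (∑ i, P i * ρ * P i).PosDef) :
    entf f ρ ≤ entf f (∑ i, P i * ρ * P i) := by
  have hcf : ConvexOn ℝ (Set.Ioi 0) fun t => t * f t⁻¹ :=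
    convexOn_mul_inv (convexOn_of_operatorConvexOn hf)
  rw [entf_eq_sum f ρ hρ, entf_eq_sum f _ hpinch]
  refine neg_le_neg ?_
  set U : Matrix (Fin d) (Fin d) ℂ := (hρ.inv.1.eigenvectorUnitary : Matrix (Fin d) (Fin d) ℂ)
    with hUdef
  set V : Matrix (Fin d) (Fin d) ℂ :=
    (hpinch.inv.1.eigenvectorUnitary : Matrix (Fin d) (Fin d) ℂ) with hVdef
  have hUU' : U * star U = 1 := Matrix.mem_unitaryGroup_iff.mp hρ.inv.1.eigenvectorUnitary.2
  have hVV : star V * V = 1 := star_mul_self_unitary _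
  have hVV' : V * star V = 1 := Matrix.mem_unitaryGroup_iff.mp hpinch.inv.1.eigenvectorUnitary.2
  have heq : ∑ i, P i * (U * Matrix.diagonal
        (fun k => (((hρ.inv.1.eigenvalues k)⁻¹ : ℝ) : ℂ)) * star U) * P i
      = V * Matrix.diagonal (fun j => (((hpinch.inv.1.eigenvalues j)⁻¹ : ℝ) : ℂ)) * star V := by
    have h1 := posdef_decomp ρ hρ
    have h2 := posdef_decomp (∑ i, P i * ρ * P i) hpinch
    calc ∑ i, P i * (U * Matrix.diagonal
          (fun k => (((hρ.inv.1.eigenvalues k)⁻¹ : ℝ) : ℂ)) * star U) * P i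
        = ∑ i, P i * ρ * P i := by
          refine Finset.sum_congr rfl fun i _ => ?_
          rw [← h1]
      _ = _ := h2
  have hlam : ∀ k, 0 < (hρ.inv.1.eigenvalues k)⁻¹ :=
    fun k => inv_pos.mpr (hρ.inv.eigenvalues_pos k)
  have hmain := key_ineq (fun t => t * f t⁻¹) hcf P hHerm hIdem hSum
      (fun k => (hρ.inv.1.eigenvalues k)⁻¹) (fun j => (hpinch.inv.1.eigenvalues j)⁻¹)
      hlam U V hUU' hVV hVV' heq
  simp only [inv_inv] at hmain
  exact hmain
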